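/- Let W be a monotone sequentially complete vector lattice with a faithful positive linear functional ψ, and suppose ψ is sequentially normal. Then ψ is normal: for every nonempty upper bounded upward directed subset J of W, ψ(sup J) = sup_{j∈J} ψ(j). -/
import Mathlib

/-- From a sequence in a directed set, extract a monotone dominating sequence in the set. -/
lemma aux_mono_dom {W : Type*} [Preorder W] {J : Set W} (hdir : DirectedOn (· ≤ ·) J)
    (k : ℕ → W) (hk : ∀ n, k n ∈ J) :
    ∃ f : ℕ → W, Monotone f ∧ (∀ n, f n ∈ J) ∧ ∀ n, k n ≤ f n := by
  have h : ∀ (x : W), x ∈ J → ∀ n : ℕ, ∃ z, z ∈ J ∧ x ≤ z ∧ k n ≤ z := by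
    intro x hx n
    obtain ⟨z, hz, h1, h2⟩ := hdir x hx (k n) (hk n)
    exact ⟨z, hz, h1, h2⟩
  choose g hgJ hg1 hg2 using h
  let F : ℕ → {x : W // x ∈ J} := fun n =>
    Nat.rec ⟨k 0, hk 0⟩ (fun n p => ⟨g p.1 p.2 (n+1), hgJ _ _ _⟩) n
  refine ⟨fun n => (F n).1, monotone_nat_of_le_succ fun n => hg1 _ _ _,
    fun n => (F n).2, fun n => ?_⟩
  cases n with
  | zero => exact le_refl _
  | succ m => exact hg2 _ _ _

/-- In a monotone sequentially complete vector lattice, a faithful sequentially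
normal positive linear functional is normal. -/
theorem stmt_11 {W : Type*} [Lattice W] [AddCommGroup W] [Module ℝ W]
    [CovariantClass W W (· + ·) (· ≤ ·)] [PosSMulMono ℝ W]
    (ψ : W →ₗ[ℝ] ℝ)
    (hψpos : ∀ a : W, 0 ≤ a → 0 ≤ ψ a)
    (hψfaith : ∀ a : W, 0 ≤ a → a ≠ 0 → 0 < ψ a)
    (hseq : ∀ f : ℕ → W, Monotone f → BddAbove (Set.range f) →
      ∃ s, IsLUB (Set.range f) s)
    (hψseqnormal : ∀ f : ℕ → W, Monotone f → BddAbove (Set.range f) →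
      ∀ s : W, IsLUB (Set.range f) s → (⨆ n, ψ (f n)) = ψ s) :
    ∀ J : Set W, J.Nonempty → DirectedOn (· ≤ ·) J → BddAbove J →
      ∃ s : W, IsLUB J s ∧ ψ s = sSup (ψ '' J) := by
  intro J hJne hJdir hJbdd
  obtain ⟨b, hb⟩ := hJbdd
  have hmono : ∀ x y : W, x ≤ y → ψ x ≤ ψ y := by
    intro x y h
    have h0 : 0 ≤ ψ (y - x) := hψpos _ (sub_nonneg.2 h)
    rw [map_sub] at h0; linarith
  have hψbdd : BddAbove (ψ '' J) := ⟨ψ b, by rintro _ ⟨x, hx, rfl⟩; exact hmono _ _ (hb hx)⟩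
  have hψne : (ψ '' J).Nonempty := hJne.image ψ
  set α := sSup (ψ '' J) with hα
  have hk : ∀ n : ℕ, ∃ x, x ∈ J ∧ α - 1/(n+1) < ψ x := by
    intro n
    have hlt : α - 1/((n:ℝ)+1) < α := by
      have : (0:ℝ) < 1/((n:ℝ)+1) := by positivity
      linarith
    obtain ⟨y, hy, hlt'⟩ := exists_lt_of_lt_csSup hψne hlt
    obtain ⟨x, hx, rfl⟩ := hy
    exact ⟨x, hx, hlt'⟩
  choose k hkJ hkψ using hk
  obtain ⟨f, hfmono, hfJ, hfk⟩ := aux_mono_dom hJdir k hkJ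
  have hfbdd : BddAbove (Set.range f) := ⟨b, by rintro _ ⟨n, rfl⟩; exact hb (hfJ n)⟩
  obtain ⟨s, hs⟩ := hseq f hfmono hfbdd
  have hψs : (⨆ n, ψ (f n)) = ψ s := hψseqnormal f hfmono hfbdd s hs
  have hψfle : ∀ n, ψ (f n) ≤ α := fun n => le_csSup hψbdd ⟨f n, hfJ n, rfl⟩
  have hψsle : ψ s ≤ α := by rw [← hψs]; exact ciSup_le hψfle
  have hψsα : ψ s = α := by
    refine le_antisymm hψsle ?_
    by_contra h
    push_neg at h
    obtain ⟨n, hn⟩ := exists_nat_one_div_lt (sub_pos.2 h)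
    have h1 : α - 1/((n:ℝ)+1) < ψ (k n) := hkψ n
    have h2 : ψ (k n) ≤ ψ (f n) := hmono _ _ (hfk n)
    have h3 : ψ (f n) ≤ ψ s := by
      rw [← hψs]
      exact le_ciSup ⟨α, by rintro _ ⟨m, rfl⟩; exact hψfle m⟩ n
    linarith
  have hub : ∀ x ∈ J, x ≤ s := by
    intro x hx
    set v : ℕ → W := fun n => f n ⊔ x with hv
    have hvmono : Monotone v := fun m n h => sup_le_sup_right (hfmono h) x
    have hvbdd : BddAbove (Set.range v) :=
      ⟨b, by rintro _ ⟨n, rfl⟩; exact sup_le (hb (hfJ n)) (hb hx)⟩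
    obtain ⟨t, ht⟩ := hseq v hvmono hvbdd
    have hψt : (⨆ n, ψ (v n)) = ψ t := hψseqnormal v hvmono hvbdd t ht
    have hψvle : ∀ n, ψ (v n) ≤ α := by
      intro n
      obtain ⟨z, hz, h1, h2⟩ := hJdir (f n) (hfJ n) x hx
      exact le_trans (hmono _ _ (sup_le h1 h2)) (le_csSup hψbdd ⟨z, hz, rfl⟩)
    have hψtle : ψ t ≤ α := by rw [← hψt]; exact ciSup_le hψvle
    have hst : s ≤ t := by
      refine (isLUB_le_iff hs).2 ?_
      rintro _ ⟨n, rfl⟩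
      exact le_trans le_sup_left (ht.1 ⟨n, rfl⟩)
    have hts : t = s := by
      by_contra hne
      have hpos : 0 < ψ (t - s) :=
        hψfaith _ (sub_nonneg.2 hst) (fun h => hne (by rwa [sub_eq_zero] at h))
      rw [map_sub] at hpos
      linarith
    calc x ≤ v 0 := le_sup_right
      _ ≤ t := ht.1 ⟨0, rfl⟩
      _ = s := hts
  refine ⟨s, ⟨hub, fun u hu => hs.2 ?_⟩, hψsα⟩
  rintro _ ⟨n, rfl⟩
  exact hu (hfJ n)
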